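/- Consider the homogeneous firework process on ℕ. If E[N] < +∞ and E[R] < +∞, then P(V) = 0 and the quenched survival probability P(V | 𝒩 = n) equals 0 for μ-almost every environment n ∈ ℕ^ℕ. -/

import Mathlib

open MeasureTheory ProbabilityTheory Filter Set
open scoped ENNReal NNReal

noncomputable section

/-- The effective radius at vertex `i`: `0` if there are no stations at `i`, and the maximum
of the radii of the stations at `i` otherwise. -/
def effRadius (station : ℕ → ℕ) (r : ℕ → ℕ → ℝ) (i : ℕ) : ℝ :=
  if h : station i = 0 then 0
  else (Finset.range (station i)).sup'
    (by simpa [Finset.nonempty_range_iff] using h) (r i)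

/-- The set of activated vertices of the firework process on `ℕ`:
`0` is active iff there is at least one station at `0`, and `m+1` is active iff there is an
active vertex `i ≤ m` whose effective radius is at least `m+1-i`. -/
inductive FireworkActive (station : ℕ → ℕ) (r : ℕ → ℕ → ℝ) : ℕ → Prop
  | zero : 1 ≤ station 0 → FireworkActive station r 0
  | succ (i m : ℕ) : i ≤ m → FireworkActive station r i →
      ((m : ℝ) + 1 - (i : ℝ) ≤ effRadius station r i) → FireworkActive station r (m + 1)

/-- Survival of the firework process: infinitely many vertices are activated. -/
def fireworkSurvives (station : ℕ → ℕ) (r : ℕ → ℕ → ℝ) : Prop :=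
  {m : ℕ | FireworkActive station r m}.Infinite

/-- The probability generating function `G(t) = E[t^N]` of a law on `ℕ`. -/
def pgf (PN : Measure ℕ) (t : ℝ) : ℝ :=
  ∑' k : ℕ, (PN {k}).toReal * t ^ k

lemma effRadius_lt_iff {stn : ℕ → ℕ} {r : ℕ → ℕ → ℝ} {i : ℕ} {t : ℝ} (ht : 0 < t) :
    effRadius stn r i < t ↔ ∀ j < stn i, r i j < t := by
  unfold effRadius
  by_cases h : stn i = 0
  · simp [h, ht]
  · simp only [h, dif_neg, not_false_iff]
    rw [Finset.sup'_lt_iff]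
    simp [Finset.mem_range]

lemma fireworkActive_zero_iff {stn : ℕ → ℕ} {r : ℕ → ℕ → ℝ} :
    FireworkActive stn r 0 ↔ 1 ≤ stn 0 := by
  constructor
  · rintro h; cases h; assumption
  · exact FireworkActive.zero

lemma fireworkActive_succ_iff {stn : ℕ → ℕ} {r : ℕ → ℕ → ℝ} {m : ℕ} :
    FireworkActive stn r (m + 1) ↔
      ∃ i ≤ m, FireworkActive stn r i ∧ (m : ℝ) + 1 - (i : ℝ) ≤ effRadius stn r i := by
  constructor
  · rintro h
    cases h with
    | succ i m him hact hrad => exact ⟨i, him, hact, hrad⟩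
  · rintro ⟨i, him, hact, hrad⟩
    exact FireworkActive.succ i m him hact hrad

lemma not_survives_of_blocked {stn : ℕ → ℕ} {r : ℕ → ℕ → ℝ} {n : ℕ}
    (h : ∀ i ≤ n, effRadius stn r i < (n : ℝ) + 1 - i) : ¬ fireworkSurvives stn r := by
  have hle : ∀ m, FireworkActive stn r m → m ≤ n := by
    intro m
    induction m using Nat.strong_induction_on with
    | _ m ih =>
      intro hact
      match m, hact with
      | 0, _ => exact Nat.zero_le n
      | m + 1, hact =>
        rcases fireworkActive_succ_iff.1 hact with ⟨i, him, hacti, hrad⟩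
        have hin : i ≤ n := ih i (Nat.lt_succ_of_le him) hacti
        have := (h i hin).trans_le' hrad
        have : (m : ℝ) + 1 < (n : ℝ) + 1 := by linarith
        exact_mod_cast Nat.lt_succ_iff.1 (by exact_mod_cast this)
  intro hsurv
  exact hsurv ((Set.finite_Iic n).subset (fun m hm => hle m hm))

lemma one_le_pow_add {a : ℝ≥0∞} (ha : a ≤ 1) (k : ℕ) : 1 ≤ a ^ k + k * (1 - a) := by
  induction k with
  | zero => simp
  | succ k ih =>
    have h1 : a * 1 ≤ a * (a ^ k + k * (1 - a)) := mul_le_mul_right ih a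
    have h2 : a * (a ^ k + k * (1 - a)) ≤ a ^ (k + 1) + k * (1 - a) := by
      rw [mul_add, ← pow_succ']
      exact add_le_add_right (by
        calc a * (k * (1 - a)) ≤ 1 * (k * (1 - a)) := mul_le_mul_left ha _
        _ = k * (1 - a) := one_mul _) _
    calc (1 : ℝ≥0∞) = a + (1 - a) := (add_tsub_cancel_of_le ha).symm
    _ ≤ (a ^ (k + 1) + k * (1 - a)) + (1 - a) := by
        refine add_le_add_left ?_ _
        calc a = a * 1 := (mul_one a).symm
        _ ≤ a ^ (k + 1) + k * (1 - a) := h1.trans h2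
    _ = a ^ (k + 1) + (k + 1 : ℕ) * (1 - a) := by push_cast; ring

lemma one_le_prod_add_sum {ι : Type*} [DecidableEq ι] (s : Finset ι) (a : ι → ℝ≥0∞) (ha : ∀ i, a i ≤ 1) :
    1 ≤ ∏ i ∈ s, a i + ∑ i ∈ s, (1 - a i) := by
  induction s using Finset.induction_on with
  | empty => simp
  | insert j s hx ih =>
    rw [Finset.prod_insert hx, Finset.sum_insert hx]
    calc (1 : ℝ≥0∞) = a j + (1 - a j) := (add_tsub_cancel_of_le (ha j)).symm
    _ ≤ a j * (∏ i ∈ s, a i + ∑ i ∈ s, (1 - a i)) + (1 - a j) := by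
        refine add_le_add_left ?_ _
        calc a j = a j * 1 := (mul_one _).symm
        _ ≤ _ := mul_le_mul_right ih _
    _ = (a j * ∏ i ∈ s, a i + a j * ∑ i ∈ s, (1 - a i)) + (1 - a j) := by rw [mul_add]
    _ ≤ (a j * ∏ i ∈ s, a i + ∑ i ∈ s, (1 - a i)) + (1 - a j) := by
        refine add_le_add_left (add_le_add_right ?_ _) _
        calc a j * ∑ i ∈ s, (1 - a i) ≤ 1 * ∑ i ∈ s, (1 - a i) := mul_le_mul_left (ha j) _
        _ = _ := one_mul _
    _ = a j * ∏ i ∈ s, a i + ((1 - a j) + ∑ i ∈ s, (1 - a i)) := by ring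

lemma tsum_indicator_le_ofReal {x : ℝ} (hx : 0 ≤ x) :
    ∑' k : ℕ, (Set.Ici ((k : ℝ) + 1)).indicator (fun _ => (1 : ℝ≥0∞)) x ≤ ENNReal.ofReal x := by
  have key : ∀ k : ℕ, (Set.Ici ((k : ℝ) + 1)).indicator (fun _ => (1 : ℝ≥0∞)) x
      = if k < ⌊x⌋₊ then 1 else 0 := by
    intro k
    by_cases h : (k : ℝ) + 1 ≤ x
    · have : k < ⌊x⌋₊ := by
        have : (k + 1 : ℕ) ≤ ⌊x⌋₊ := Nat.le_floor (by exact_mod_cast h)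
        omega
      simp [Set.indicator_of_mem, h, this]
    · have : ¬ k < ⌊x⌋₊ := by
        intro hk
        exact h (by
          have h1 : ((k:ℝ) + 1) ≤ (⌊x⌋₊ : ℝ) := by exact_mod_cast Nat.add_one_le_iff.2 hk
          exact h1.trans (Nat.floor_le hx))
      simp [Set.indicator_of_notMem, h, this]
  calc ∑' k : ℕ, (Set.Ici ((k : ℝ) + 1)).indicator (fun _ => (1 : ℝ≥0∞)) x
      = ∑' k : ℕ, if k < ⌊x⌋₊ then (1:ℝ≥0∞) else 0 := by simp_rw [key]
    _ = ∑ k ∈ Finset.range ⌊x⌋₊, if k < ⌊x⌋₊ then (1:ℝ≥0∞) else 0 := by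
        refine tsum_eq_sum ?_
        intro k hk
        simp [Finset.mem_range] at hk
        simp [hk]
    _ = (⌊x⌋₊ : ℝ≥0∞) := by
        rw [Finset.sum_ite_of_true]
        · simp
        · intro k hk; simpa [Finset.mem_range] using hk
    _ ≤ ENNReal.ofReal x := by
        rw [← ENNReal.ofReal_natCast]
        exact ENNReal.ofReal_le_ofReal (Nat.floor_le hx)


/-- basic event -/
def FWA (i : ℕ) (t : ℝ) : Set ((ℕ → ℕ) × (ℕ → ℕ → ℝ)) := {p | ∀ j < p.1 i, p.2 i j < t}

lemma measurable_fst_eval (i : ℕ) : Measurable (fun p : (ℕ → ℕ) × (ℕ → ℕ → ℝ) => p.1 i) :=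
  (measurable_pi_apply i).comp measurable_fst

lemma measurable_snd_eval (i j : ℕ) : Measurable (fun p : (ℕ → ℕ) × (ℕ → ℕ → ℝ) => p.2 i j) :=
  measurable_snd.eval.eval

lemma measurableSet_FWA (i : ℕ) (t : ℝ) : MeasurableSet (FWA i t) := by
  have : FWA i t = ⋂ j : ℕ, ({p : (ℕ → ℕ) × (ℕ → ℕ → ℝ) | j < p.1 i}ᶜ ∪ {p | p.2 i j < t}) := by
    ext p
    simp only [FWA, Set.mem_setOf_eq, Set.mem_iInter, Set.mem_union, Set.mem_compl_iff]
    constructor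
    · intro h j; by_cases hj : j < p.1 i
      · exact Or.inr (h j hj)
      · exact Or.inl hj
    · intro h j hj; rcases h j with h' | h'
      · exact absurd hj h'
      · exact h'
  rw [this]
  refine MeasurableSet.iInter fun j => MeasurableSet.union ?_ ?_
  · exact ((measurable_fst_eval i (measurableSet_Ioi (a := j))).compl)
  · exact measurable_snd_eval i j measurableSet_Iio

lemma nu_section {PR : Measure ℝ} {ν : Measure (ℕ → ℕ → ℝ)}
    (hRlaw : ∀ p : ℕ × ℕ, ν.map (fun r => r p.1 p.2) = PR)
    (hRindep : iIndepFun
      (fun (p : ℕ × ℕ) (r : ℕ → ℕ → ℝ) => r p.1 p.2) ν)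
    (S : Finset ℕ) (t : ℕ → ℝ) (f : ℕ → ℕ) :
    ν {r | ∀ i ∈ S, ∀ j < f i, r i j < t i} = ∏ i ∈ S, (PR (Set.Iio (t i))) ^ (f i) := by
  classical
  set Q : Finset (ℕ × ℕ) := S.biUnion (fun i => ({i} : Finset ℕ) ×ˢ Finset.range (f i)) with hQ
  have hmemQ : ∀ q : ℕ × ℕ, q ∈ Q ↔ q.1 ∈ S ∧ q.2 < f q.1 := by
    intro q
    simp only [hQ, Finset.mem_biUnion, Finset.mem_product, Finset.mem_singleton,
      Finset.mem_range]
    constructor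
    · rintro ⟨i, hi, h1, h2⟩; exact ⟨h1 ▸ hi, h1 ▸ h2⟩
    · rintro ⟨h1, h2⟩; exact ⟨q.1, h1, rfl, h2⟩
  have hset : {r : ℕ → ℕ → ℝ | ∀ i ∈ S, ∀ j < f i, r i j < t i}
      = ⋂ q ∈ Q, (fun r : ℕ → ℕ → ℝ => r q.1 q.2) ⁻¹' (Set.Iio (t q.1)) := by
    ext r
    simp only [Set.mem_setOf_eq, Set.mem_iInter, Set.mem_preimage, Set.mem_Iio]
    constructor
    · intro h q hq; rcases (hmemQ q).1 hq with ⟨h1, h2⟩; exact h q.1 h1 q.2 h2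
    · intro h i hi j hj; exact h (i, j) ((hmemQ (i, j)).2 ⟨hi, hj⟩)
  rw [hset]
  rw [hRindep.measure_inter_preimage_eq_mul Q
    (sets := fun q => Set.Iio (t q.1)) (fun q _ => measurableSet_Iio)]
  have hone : ∀ q : ℕ × ℕ, ν ((fun r : ℕ → ℕ → ℝ => r q.1 q.2) ⁻¹' Set.Iio (t q.1))
      = PR (Set.Iio (t q.1)) := by
    intro q
    have hmeas : Measurable fun r : ℕ → ℕ → ℝ => r q.1 q.2 := (measurable_pi_apply q.1).eval
    rw [← hRlaw q, Measure.map_apply hmeas measurableSet_Iio]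
  simp_rw [hone]
  rw [Finset.prod_biUnion]
  · refine Finset.prod_congr rfl fun i _ => ?_
    rw [Finset.prod_product]
    simp
  · intro x _ y _ hxy
    simp only [Finset.disjoint_left, Finset.mem_product, Finset.mem_singleton]
    rintro q ⟨rfl, -⟩ ⟨rfl, -⟩
    exact hxy rfl

lemma lintegral_prod_eval {μ : Measure (ℕ → ℕ)} [IsProbabilityMeasure μ]
    (hNindep : iIndepFun (fun (i : ℕ) (f : ℕ → ℕ) => f i) μ)
    (S : Finset ℕ) (g : ℕ → ℕ → ℝ≥0∞) :
    ∫⁻ f, ∏ i ∈ S, g i (f i) ∂μ = ∏ i ∈ S, ∫⁻ f, g i (f i) ∂μ := by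
  classical
  have hG : iIndepFun (fun (i : ℕ) (f : ℕ → ℕ) => g i (f i)) μ :=
    hNindep.comp g (fun i => measurable_from_top)
  have hGm : ∀ i, Measurable (fun f : ℕ → ℕ => g i (f i)) :=
    fun i => measurable_from_top.comp (measurable_pi_apply i)
  induction S using Finset.induction_on with
  | empty => simp
  | insert a s hx ih =>
    have hind : IndepFun (fun f : ℕ → ℕ => g a (f a))
        (∏ j ∈ s, fun f : ℕ → ℕ => g j (f j)) μ :=
      (hG.indepFun_finset_prod_of_notMem hGm hx).symm
    have hprodm : Measurable (∏ j ∈ s, fun f : ℕ → ℕ => g j (f j)) := by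
      rw [Finset.prod_fn]
      exact Finset.measurable_prod s fun j _ => hGm j
    have key := lintegral_mul_eq_lintegral_mul_lintegral_of_indepFun (hGm a) hprodm hind
    simp_rw [Finset.prod_insert hx]
    have heq : ∀ f : ℕ → ℕ, g a (f a) * ∏ i ∈ s, g i (f i)
        = ((fun f : ℕ → ℕ => g a (f a)) * ∏ j ∈ s, fun f : ℕ → ℕ => g j (f j)) f := by
      intro f; simp [Finset.prod_apply]
    calc ∫⁻ f, g a (f a) * ∏ i ∈ s, g i (f i) ∂μ
        = ∫⁻ f, ((fun f : ℕ → ℕ => g a (f a)) * ∏ j ∈ s, fun f : ℕ → ℕ => g j (f j)) f ∂μ := by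
          simp_rw [heq]
      _ = (∫⁻ f, g a (f a) ∂μ) * ∫⁻ f, (∏ j ∈ s, fun f : ℕ → ℕ => g j (f j)) f ∂μ := key
      _ = (∫⁻ f, g a (f a) ∂μ) * ∫⁻ f, ∏ i ∈ s, g i (f i) ∂μ := by
          congr 1; refine lintegral_congr fun f => ?_; simp [Finset.prod_apply]
      _ = (∫⁻ f, g a (f a) ∂μ) * ∏ i ∈ s, ∫⁻ f, g i (f i) ∂μ := by rw [ih]


lemma tsum_singleton_meas {PN : Measure ℕ} [IsProbabilityMeasure PN] :
    ∑' k : ℕ, PN {k} = 1 := by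
  have : (Set.univ : Set ℕ) = ⋃ k : ℕ, {k} := by ext k; simp
  rw [← measure_univ (μ := PN), this, measure_iUnion]
  · exact fun i j hij => by simp [Set.disjoint_singleton, hij]
  · exact fun k => measurableSet_singleton k

lemma Gv_le_one {PN : Measure ℕ} [IsProbabilityMeasure PN] {a : ℝ≥0∞} (ha : a ≤ 1) :
    ∑' k : ℕ, a ^ k * PN {k} ≤ 1 := by
  calc ∑' k : ℕ, a ^ k * PN {k} ≤ ∑' k : ℕ, 1 * PN {k} :=
    ENNReal.tsum_le_tsum fun k => mul_le_mul_left (pow_le_one' ha k) _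
  _ = 1 := by simpa using tsum_singleton_meas (PN := PN)

lemma Gv_mono {PN : Measure ℕ} {a b : ℝ≥0∞} (hab : a ≤ b) :
    ∑' k : ℕ, a ^ k * PN {k} ≤ ∑' k : ℕ, b ^ k * PN {k} :=
  ENNReal.tsum_le_tsum fun k => mul_le_mul_left (pow_le_pow_left' hab k) _

lemma Gv_pos {PN : Measure ℕ} [IsProbabilityMeasure PN] {a : ℝ≥0∞} (ha : 0 < a) :
    0 < ∑' k : ℕ, a ^ k * PN {k} := by
  obtain ⟨k, hk⟩ : ∃ k : ℕ, PN {k} ≠ 0 := by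
    by_contra h
    push_neg at h
    have := tsum_singleton_meas (PN := PN)
    simp [h] at this
  calc (0 : ℝ≥0∞) < a ^ k * PN {k} :=
    ENNReal.mul_pos (by simpa using (ENNReal.pow_pos ha k).ne') hk
  _ ≤ _ := ENNReal.le_tsum k

lemma one_le_Gv_add {PN : Measure ℕ} [IsProbabilityMeasure PN] {a : ℝ≥0∞} (ha : a ≤ 1) :
    1 ≤ (∑' k : ℕ, a ^ k * PN {k}) + (∫⁻ k, (k : ℝ≥0∞) ∂PN) * (1 - a) := by
  have h1 : (1 : ℝ≥0∞) = ∑' k : ℕ, PN {k} := tsum_singleton_meas.symm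
  have hEN : ∫⁻ k, (k : ℝ≥0∞) ∂PN = ∑' k : ℕ, (k : ℝ≥0∞) * PN {k} :=
    lintegral_countable' _
  nth_rewrite 1 [h1]
  rw [hEN, ← ENNReal.tsum_mul_right, ← ENNReal.tsum_add]
  refine ENNReal.tsum_le_tsum fun k => ?_
  calc PN {k} = 1 * PN {k} := (one_mul _).symm
  _ ≤ (a ^ k + k * (1 - a)) * PN {k} := mul_le_mul_left (one_le_pow_add ha k) _
  _ = a ^ k * PN {k} + (k : ℝ≥0∞) * PN {k} * (1 - a) := by ring


lemma measure_iInter_FWA {PN : Measure ℕ} {PR : Measure ℝ}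
    {μ : Measure (ℕ → ℕ)} {ν : Measure (ℕ → ℕ → ℝ)}
    [IsProbabilityMeasure μ] [IsProbabilityMeasure ν]
    (hNlaw : ∀ i : ℕ, μ.map (fun f => f i) = PN)
    (hNindep : iIndepFun (fun (i : ℕ) (f : ℕ → ℕ) => f i) μ)
    (hRlaw : ∀ p : ℕ × ℕ, ν.map (fun r => r p.1 p.2) = PR)
    (hRindep : iIndepFun
      (fun (p : ℕ × ℕ) (r : ℕ → ℕ → ℝ) => r p.1 p.2) ν)
    (S : Finset ℕ) (t : ℕ → ℝ) :
    (μ.prod ν) (⋂ i ∈ S, FWA i (t i))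
      = ∏ i ∈ S, ∑' k : ℕ, (PR (Set.Iio (t i))) ^ k * PN {k} := by
  have hmeas : MeasurableSet (⋂ i ∈ S, FWA i (t i)) :=
    MeasurableSet.biInter S.countable_toSet fun i _ => measurableSet_FWA i (t i)
  rw [Measure.prod_apply hmeas]
  have hsec : ∀ f : ℕ → ℕ, (Prod.mk f ⁻¹' ⋂ i ∈ S, FWA i (t i))
      = {r | ∀ i ∈ S, ∀ j < f i, r i j < t i} := by
    intro f; ext r
    simp [FWA]
  calc ∫⁻ f, ν (Prod.mk f ⁻¹' ⋂ i ∈ S, FWA i (t i)) ∂μ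
      = ∫⁻ f, ∏ i ∈ S, (PR (Set.Iio (t i))) ^ (f i) ∂μ := by
        refine lintegral_congr fun f => ?_
        rw [hsec f, nu_section hRlaw hRindep S t f]
    _ = ∏ i ∈ S, ∫⁻ f, (PR (Set.Iio (t i))) ^ (f i) ∂μ :=
        lintegral_prod_eval hNindep S (fun i k => (PR (Set.Iio (t i))) ^ k)
    _ = ∏ i ∈ S, ∑' k : ℕ, (PR (Set.Iio (t i))) ^ k * PN {k} := by
        refine Finset.prod_congr rfl fun i _ => ?_
        rw [← lintegral_map measurable_from_top (measurable_pi_apply i), hNlaw i,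
          lintegral_countable']



/-- the event that no vertex `i` with `k ≤ i ≤ n` can reach past `n`. -/
def FWUk (k n : ℕ) : Set ((ℕ → ℕ) × (ℕ → ℕ → ℝ)) :=
  ⋂ i ∈ Finset.Icc k n, FWA i ((n : ℝ) + 1 - (i : ℝ))

lemma mem_FWUk {k n : ℕ} {p : (ℕ → ℕ) × (ℕ → ℕ → ℝ)} :
    p ∈ FWUk k n ↔ ∀ i, k ≤ i → i ≤ n → effRadius p.1 p.2 i < (n : ℝ) + 1 - (i : ℝ) := by
  have hpos : ∀ i : ℕ, i ≤ n → (0 : ℝ) < (n : ℝ) + 1 - (i : ℝ) := by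
    intro i hi
    have : (i : ℝ) ≤ (n : ℝ) := by exact_mod_cast hi
    linarith
  simp only [FWUk, Set.mem_iInter, Finset.mem_Icc]
  constructor
  · intro h i h1 h2
    exact (effRadius_lt_iff (hpos i h2)).2 (h i ⟨h1, h2⟩)
  · rintro h i ⟨h1, h2⟩
    exact fun j hj => (effRadius_lt_iff (hpos i h2)).1 (h i h1 h2) j hj

lemma FWUk_mono {k n : ℕ} : FWUk 0 n ⊆ FWUk k n := by
  intro p hp
  rw [mem_FWUk] at hp ⊢
  exact fun i _ h2 => hp i (Nat.zero_le i) h2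

/-- The tail identity : the event that blocking happens at arbitrarily late times does not
depend on the vertices below `k`. -/
lemma FWT_eq (k : ℕ) :
    (⋂ n, ⋃ m, ⋃ (_ : n ≤ m), FWUk 0 m) = ⋂ n, ⋃ m, ⋃ (_ : n ≤ m), FWUk k m := by
  apply Set.Subset.antisymm
  · refine Set.iInter_mono fun n => Set.iUnion_mono fun m => Set.iUnion_mono fun _ => FWUk_mono
  · intro p hp
    simp only [Set.mem_iInter, Set.mem_iUnion] at hp ⊢
    intro n
    set C : ℕ := (Finset.range (k + 1)).sup (fun i => ⌈effRadius p.1 p.2 i⌉₊) with hC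
    obtain ⟨m, hm, hmem⟩ := hp (max n (k + C))
    refine ⟨m, le_trans (le_max_left _ _) hm, ?_⟩
    have hkC : k + C ≤ m := le_trans (le_max_right _ _) hm
    rw [mem_FWUk] at hmem ⊢
    intro i _ hin
    by_cases hik : k ≤ i
    · exact hmem i hik hin
    · push_neg at hik
      have h1 : effRadius p.1 p.2 i ≤ (C : ℝ) := by
        calc effRadius p.1 p.2 i ≤ (⌈effRadius p.1 p.2 i⌉₊ : ℝ) := Nat.le_ceil _
        _ ≤ (C : ℝ) := by
            have : ⌈effRadius p.1 p.2 i⌉₊ ≤ C :=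
              Finset.le_sup (f := fun i => ⌈effRadius p.1 p.2 i⌉₊)
                (Finset.mem_range.2 (Nat.lt_succ_of_le hik.le))
            exact_mod_cast this
      have h2 : (k : ℝ) + (C : ℝ) ≤ (m : ℝ) := by exact_mod_cast hkC
      have h3 : (i : ℝ) < (k : ℝ) := by exact_mod_cast hik
      linarith


/-- If blocking ever happens, the process does not survive. -/
lemma not_survives_of_mem_FWUk {p : (ℕ → ℕ) × (ℕ → ℕ → ℝ)} {n : ℕ} (hp : p ∈ FWUk 0 n) :
    ¬ fireworkSurvives p.1 p.2 := by
  exact not_survives_of_blocked (n := n) fun i hi => mem_FWUk.1 hp i (Nat.zero_le i) hi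


lemma measurableSet_active (m : ℕ) :
    MeasurableSet {p : (ℕ → ℕ) × (ℕ → ℕ → ℝ) | FireworkActive p.1 p.2 m} := by
  induction m using Nat.strong_induction_on with
  | _ m ih =>
    match m with
    | 0 =>
      have : {p : (ℕ → ℕ) × (ℕ → ℕ → ℝ) | FireworkActive p.1 p.2 0}
          = (fun p : (ℕ → ℕ) × (ℕ → ℕ → ℝ) => p.1 0) ⁻¹' (Set.Ici 1) := by
        ext p; simp [fireworkActive_zero_iff]
      rw [this]
      exact measurable_fst_eval 0 measurableSet_Ici
    | m + 1 =>
      have hset : {p : (ℕ → ℕ) × (ℕ → ℕ → ℝ) | FireworkActive p.1 p.2 (m + 1)}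
          = ⋃ i, ⋃ (_ : i ≤ m),
              ({p : (ℕ → ℕ) × (ℕ → ℕ → ℝ) | FireworkActive p.1 p.2 i}
                ∩ (FWA i ((m : ℝ) + 1 - (i : ℝ)))ᶜ) := by
        ext p
        have hpos : ∀ i : ℕ, i ≤ m → (0 : ℝ) < (m : ℝ) + 1 - (i : ℝ) := by
          intro i hi
          have : (i : ℝ) ≤ (m : ℝ) := by exact_mod_cast hi
          linarith
        simp only [Set.mem_setOf_eq, Set.mem_iUnion, Set.mem_inter_iff,
          Set.mem_compl_iff, fireworkActive_succ_iff]
        constructor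
        · rintro ⟨i, him, hact, hrad⟩
          refine ⟨i, him, hact, ?_⟩
          intro hFWA
          have := (effRadius_lt_iff (hpos i him)).2 hFWA
          linarith
        · rintro ⟨i, him, hact, hFWA⟩
          refine ⟨i, him, hact, ?_⟩
          by_contra hlt
          push_neg at hlt
          exact hFWA ((effRadius_lt_iff (hpos i him)).1 hlt)
      rw [hset]
      exact MeasurableSet.iUnion fun i => MeasurableSet.iUnion fun hi =>
        (ih i (Nat.lt_succ_of_le hi)).inter (measurableSet_FWA _ _).compl

lemma survives_eq :
    {p : (ℕ → ℕ) × (ℕ → ℕ → ℝ) | fireworkSurvives p.1 p.2}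
      = ⋂ n, ⋃ m, ⋃ (_ : n ≤ m), {p : (ℕ → ℕ) × (ℕ → ℕ → ℝ) | FireworkActive p.1 p.2 m} := by
  ext p
  simp only [Set.mem_setOf_eq, Set.mem_iInter, Set.mem_iUnion]
  constructor
  · intro h n
    obtain ⟨m, hm, hnm⟩ := h.exists_gt n
    exact ⟨m, hnm.le, hm⟩
  · intro h
    refine Set.infinite_of_forall_exists_gt fun n => ?_
    obtain ⟨m, hnm, hm⟩ := h (n + 1)
    exact ⟨m, hm, Nat.lt_of_succ_le hnm⟩

lemma measurableSet_survives :
    MeasurableSet {p : (ℕ → ℕ) × (ℕ → ℕ → ℝ) | fireworkSurvives p.1 p.2} := by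
  rw [survives_eq]
  exact MeasurableSet.iInter fun n => MeasurableSet.iUnion fun m =>
    MeasurableSet.iUnion fun _ => measurableSet_active m

/-- **Proposition 3(4)**: for the homogeneous firework process on `ℕ`, if
`E[N] < +∞` and `E[R] < +∞` then `P(V) = 0` and the quenched survival probability
is `0` for `μ`-almost every environment. -/
theorem firework_extinction_of_finite_expectations
    (PN : Measure ℕ) (PR : Measure ℝ)
    [IsProbabilityMeasure PN] [IsProbabilityMeasure PR]
    (μ : Measure (ℕ → ℕ)) (ν : Measure (ℕ → ℕ → ℝ))
    [IsProbabilityMeasure μ] [IsProbabilityMeasure ν]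
    -- the station numbers are i.i.d. with law `PN`
    (hNlaw : ∀ i : ℕ, μ.map (fun f => f i) = PN)
    (hNindep : iIndepFun (fun (i : ℕ) (f : ℕ → ℕ) => f i) μ)
    -- the radii are i.i.d. with law `PR`
    (hRlaw : ∀ p : ℕ × ℕ, ν.map (fun r => r p.1 p.2) = PR)
    (hRindep : iIndepFun
      (fun (p : ℕ × ℕ) (r : ℕ → ℕ → ℝ) => r p.1 p.2) ν)
    -- the radii take values in `[0, ∞)` and `P(R < 1) ∈ (0,1)`
    (hRnonneg : PR (Set.Iio (0 : ℝ)) = 0)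
    (hR1 : 0 < PR (Set.Iio (1 : ℝ)) ∧ PR (Set.Iio (1 : ℝ)) < 1)
    -- `E[N] < +∞` and `E[R] < +∞`
    (hEN : ∫⁻ k, (k : ℝ≥0∞) ∂PN < ⊤)
    (hER : ∫⁻ x, ENNReal.ofReal x ∂PR < ⊤) :
    (μ.prod ν) {p : (ℕ → ℕ) × (ℕ → ℕ → ℝ) | fireworkSurvives p.1 p.2} = 0 ∧
    ∀ᵐ stn ∂μ, ν {r | fireworkSurvives stn r} = 0 := by
  classical
  set Gv : ℝ → ℝ≥0∞ := fun t => ∑' k : ℕ, (PR (Set.Iio t)) ^ k * PN {k} with hGvdef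
  have hGle : ∀ t : ℝ, PR (Set.Iio t) ≤ 1 := fun t => prob_le_one
  have hGvle : ∀ t : ℝ, Gv t ≤ 1 := fun t => Gv_le_one (hGle t)
  have hGvmono : ∀ {a b : ℝ}, a ≤ b → Gv a ≤ Gv b :=
    fun h => Gv_mono (measure_mono (Set.Iio_subset_Iio h))
  have q1 : 0 < Gv 1 := Gv_pos hR1.1
  -- the measure of the blocking events
  have hprod : ∀ n : ℕ, (μ.prod ν) (FWUk 0 n) = ∏ j ∈ Finset.range (n + 1), Gv ((j : ℝ) + 1) := by
    intro n
    have hIcc : Finset.Icc 0 n = Finset.range (n + 1) := by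
      ext i; simp [Nat.lt_succ_iff]
    rw [show FWUk 0 n = ⋂ i ∈ Finset.Icc 0 n, FWA i ((n : ℝ) + 1 - (i : ℝ)) from rfl,
      measure_iInter_FWA hNlaw hNindep hRlaw hRindep (Finset.Icc 0 n)
        (fun i => (n : ℝ) + 1 - (i : ℝ)), hIcc,
      ← Finset.prod_range_reflect (fun j => Gv ((j : ℝ) + 1)) (n + 1)]
    refine Finset.prod_congr rfl fun j hj => ?_
    rw [Finset.mem_range, Nat.lt_succ_iff] at hj
    simp only [Nat.add_sub_cancel]
    congr 1
    rw [Nat.cast_sub hj]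
    ring_nf
  -- summability
  have hsub : ∀ t : ℝ, 1 - Gv t ≤ (∫⁻ k, (k : ℝ≥0∞) ∂PN) * (1 - PR (Set.Iio t)) := by
    intro t
    refine tsub_le_iff_right.2 ?_
    rw [add_comm]
    exact one_le_Gv_add (hGle t)
  have hRiosum : ∑' j : ℕ, (1 - PR (Set.Iio ((j : ℝ) + 1))) ≤ ∫⁻ x, ENNReal.ofReal x ∂PR := by
    have h1 : ∀ j : ℕ, 1 - PR (Set.Iio ((j : ℝ) + 1)) = PR (Set.Ici ((j : ℝ) + 1)) := by
      intro j
      rw [← Set.compl_Iio, prob_compl_eq_one_sub measurableSet_Iio]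
    have h2 : ∀ j : ℕ, PR (Set.Ici ((j : ℝ) + 1))
        = ∫⁻ x, (Set.Ici ((j : ℝ) + 1)).indicator (fun _ => (1 : ℝ≥0∞)) x ∂PR :=
      fun j => (lintegral_indicator_one measurableSet_Ici).symm
    simp_rw [h1, h2]
    rw [← lintegral_tsum (f := fun (j : ℕ) (x : ℝ) =>
      (Set.Ici ((j : ℝ) + 1)).indicator (fun _ => (1 : ℝ≥0∞)) x)
      (fun j => (measurable_one.indicator measurableSet_Ici).aemeasurable)]
    refine lintegral_mono_ae ?_
    have hae : ∀ᵐ x ∂PR, 0 ≤ x := by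
      rw [ae_iff]
      have hset : {x : ℝ | ¬ 0 ≤ x} = Set.Iio 0 := by
        ext x; simp [not_le]
      rw [hset]
      exact hRnonneg
    exact hae.mono fun x hx => tsum_indicator_le_ofReal hx
  have hGsum : ∑' j : ℕ, (1 - Gv ((j : ℝ) + 1)) ≠ ∞ := by
    refine ne_top_of_le_ne_top ?_ (ENNReal.tsum_le_tsum fun j => hsub ((j : ℝ) + 1))
    rw [ENNReal.tsum_mul_left]
    exact (ENNReal.mul_lt_top hEN (lt_of_le_of_lt hRiosum hER)).ne
  have htd := ENNReal.tendsto_sum_nat_add (fun j => 1 - Gv ((j : ℝ) + 1)) hGsum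
  obtain ⟨K, hK⟩ := (htd.eventually_lt_const (by norm_num : (0 : ℝ≥0∞) < 2⁻¹)).exists
  set c : ℝ≥0∞ := 2⁻¹ * Gv 1 ^ K with hcdef
  have hc0 : 0 < c := ENNReal.mul_pos (by norm_num) (pow_ne_zero K q1.ne')
  -- lower bound on the probability of blocking
  have hUc : ∀ n, K ≤ n → c ≤ (μ.prod ν) (FWUk 0 n) := by
    intro n hn
    rw [hprod n]
    have hsplit : n + 1 = K + (n + 1 - K) := by omega
    rw [hsplit, Finset.prod_range_add]
    have h1 : Gv 1 ^ K ≤ ∏ j ∈ Finset.range K, Gv ((j : ℝ) + 1) := by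
      calc Gv 1 ^ K = ∏ _j ∈ Finset.range K, Gv 1 := by
            rw [Finset.prod_const, Finset.card_range]
        _ ≤ ∏ j ∈ Finset.range K, Gv ((j : ℝ) + 1) := by
            refine Finset.prod_le_prod' fun j _ => hGvmono ?_
            have : (0 : ℝ) ≤ (j : ℝ) := Nat.cast_nonneg j
            linarith
    have h2 : (2 : ℝ≥0∞)⁻¹ ≤ ∏ j ∈ Finset.range (n + 1 - K), Gv (((K + j : ℕ) : ℝ) + 1) := by
      have hW := one_le_prod_add_sum (Finset.range (n + 1 - K))
        (fun j => Gv (((K + j : ℕ) : ℝ) + 1)) (fun j => hGvle _)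
      have hS : ∑ j ∈ Finset.range (n + 1 - K), (1 - Gv (((K + j : ℕ) : ℝ) + 1)) ≤ 2⁻¹ := by
        refine le_trans ?_ hK.le
        calc ∑ j ∈ Finset.range (n + 1 - K), (1 - Gv (((K + j : ℕ) : ℝ) + 1))
            = ∑ j ∈ Finset.range (n + 1 - K), (1 - Gv (((j + K : ℕ) : ℝ) + 1)) := by
              refine Finset.sum_congr rfl fun j _ => by rw [Nat.add_comm]
          _ ≤ ∑' j : ℕ, (1 - Gv (((j + K : ℕ) : ℝ) + 1)) := ENNReal.sum_le_tsum _
      have h3 := tsub_le_tsub_left hS (1 : ℝ≥0∞)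
      rw [ENNReal.one_sub_inv_two] at h3
      exact h3.trans (tsub_le_iff_right.2 (by simpa using hW))
    calc c = 2⁻¹ * Gv 1 ^ K := rfl
      _ = Gv 1 ^ K * 2⁻¹ := mul_comm _ _
      _ ≤ (∏ j ∈ Finset.range K, Gv ((j : ℝ) + 1))
            * ∏ j ∈ Finset.range (n + 1 - K), Gv (((K + j : ℕ) : ℝ) + 1) := mul_le_mul' h1 h2
  -- the tail event
  set T : Set ((ℕ → ℕ) × (ℕ → ℕ → ℝ)) := ⋂ n, ⋃ m, ⋃ (_ : n ≤ m), FWUk 0 m with hTdef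
  have hUmeas : ∀ k n : ℕ, MeasurableSet (FWUk k n) := fun k n =>
    MeasurableSet.biInter (Finset.Icc k n).countable_toSet fun i _ => measurableSet_FWA _ _
  have hDmeas : ∀ n : ℕ, MeasurableSet (⋃ m, ⋃ (_ : n ≤ m), FWUk 0 m) := fun n =>
    MeasurableSet.iUnion fun m => MeasurableSet.iUnion fun _ => hUmeas 0 m
  have hTmeas : MeasurableSet T :=
    MeasurableSet.iInter fun n => hDmeas n
  -- `c ≤ P T`
  have hcT : c ≤ (μ.prod ν) T := by
    have hanti : Antitone fun n => ⋃ m, ⋃ (_ : n ≤ m), FWUk 0 m := by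
      intro n n' hnn'
      refine Set.iUnion_mono fun m => ?_
      refine Set.iUnion_subset fun h => ?_
      exact Set.subset_iUnion (fun _ : n ≤ m => FWUk 0 m) (le_trans hnn' h)
    have htends := tendsto_measure_iInter_atTop (μ := μ.prod ν)
      (fun n => (hDmeas n).nullMeasurableSet) hanti ⟨0, measure_ne_top _ _⟩
    refine ge_of_tendsto htends (Filter.Eventually.of_forall fun n => ?_)
    calc c ≤ (μ.prod ν) (FWUk 0 (max n K)) := hUc _ (le_max_right n K)
      _ ≤ (μ.prod ν) (⋃ m, ⋃ (_ : n ≤ m), FWUk 0 m) :=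
        measure_mono (Set.subset_iUnion₂ (s := fun m (_ : n ≤ m) => FWUk 0 m) (max n K) (le_max_left n K))
  -- Kolmogorov 0-1 law
  set sσ : ℕ → MeasurableSpace ((ℕ → ℕ) × (ℕ → ℕ → ℝ)) :=
    fun i => MeasurableSpace.generateFrom {A | ∃ t : ℝ, A = FWA i t} with hsσdef
  have h_le : ∀ i, sσ i ≤ (inferInstance : MeasurableSpace ((ℕ → ℕ) × (ℕ → ℕ → ℝ))) := by
    intro i
    refine MeasurableSpace.generateFrom_le ?_
    rintro A ⟨t, rfl⟩
    exact measurableSet_FWA i t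
  have h_pi : ∀ i, IsPiSystem {A : Set ((ℕ → ℕ) × (ℕ → ℕ → ℝ)) | ∃ t : ℝ, A = FWA i t} := by
    rintro i A ⟨a, rfl⟩ B ⟨b, rfl⟩ -
    refine ⟨min a b, ?_⟩
    ext p
    simp only [FWA, Set.mem_inter_iff, Set.mem_setOf_eq, lt_min_iff]
    constructor
    · rintro ⟨h1, h2⟩ j hj; exact ⟨h1 j hj, h2 j hj⟩
    · intro h; exact ⟨fun j hj => (h j hj).1, fun j hj => (h j hj).2⟩
  have hsingle : ∀ (i : ℕ) (t : ℝ), (μ.prod ν) (FWA i t) = Gv t := by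
    intro i t
    have := measure_iInter_FWA hNlaw hNindep hRlaw hRindep {i} (fun _ => t)
    simpa using this
  have h_ind : iIndepSets (fun i => {A : Set ((ℕ → ℕ) × (ℕ → ℕ → ℝ)) | ∃ t : ℝ, A = FWA i t})
      (μ.prod ν) := by
    rw [iIndepSets_iff]
    intro S f hf
    have hex : ∀ i ∈ S, ∃ t : ℝ, f i = FWA i t := hf
    set t : ℕ → ℝ := fun i => if h : ∃ c : ℝ, f i = FWA i c then h.choose else 0 with htdef
    have hfi : ∀ i ∈ S, f i = FWA i (t i) := by
      intro i hi
      have h := hex i hi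
      simp only [htdef, dif_pos h]
      exact h.choose_spec
    have hiI : (⋂ i ∈ S, f i) = ⋂ i ∈ S, FWA i (t i) :=
      Set.iInter₂_congr hfi
    rw [hiI, measure_iInter_FWA hNlaw hNindep hRlaw hRindep S t]
    refine (Finset.prod_congr rfl fun i hi => ?_).symm
    rw [hfi i hi, hsingle i (t i)]
  have h_indep : iIndep sσ (μ.prod ν) :=
    iIndepSets.iIndep h_le _ h_pi (fun i => rfl) h_ind
  -- `T` is a tail event
  have ht_tail : MeasurableSet[Filter.limsup sσ Filter.atTop] T := by
    rw [Filter.limsup_eq_iInf_iSup_of_nat, MeasurableSpace.measurableSet_iInf]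
    intro k
    have hTk : T = ⋂ n, ⋃ m, ⋃ (_ : n ≤ m), FWUk k m := FWT_eq k
    rw [hTk]
    have hFWAmem : ∀ (i : ℕ) (t : ℝ), k ≤ i →
        MeasurableSet[⨆ i, ⨆ (_ : i ≥ k), sσ i] (FWA i t) := by
      intro i t hik
      have hle : sσ i ≤ ⨆ i, ⨆ (_ : i ≥ k), sσ i :=
        le_iSup₂ (f := fun (i : ℕ) (_ : i ≥ k) => sσ i) i hik
      exact hle _ (MeasurableSpace.measurableSet_generateFrom ⟨t, rfl⟩)
    refine MeasurableSet.iInter fun n => ?_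
    refine MeasurableSet.iUnion fun m => ?_
    refine MeasurableSet.iUnion fun _ => ?_
    have hrw : FWUk k m = ⋂ i, ⋂ (_ : k ≤ i ∧ i ≤ m), FWA i ((m : ℝ) + 1 - (i : ℝ)) := by
      ext p
      simp [FWUk, Finset.mem_Icc, and_imp]
    rw [hrw]
    exact MeasurableSet.iInter fun i => MeasurableSet.iInter fun hcond => hFWAmem i _ hcond.1
  have hT01 := measure_zero_or_one_of_measurableSet_limsup_atTop h_le h_indep ht_tail
  have hT1 : (μ.prod ν) T = 1 := by
    rcases hT01 with h0 | h1
    · exact absurd (h0 ▸ hcT) (by simpa using hc0.ne')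
    · exact h1
  have hTc0 : (μ.prod ν) Tᶜ = 0 := by
    rw [prob_compl_eq_one_sub hTmeas, hT1, tsub_self]
  -- survival implies the complement of `T`
  have hVsub : {p : (ℕ → ℕ) × (ℕ → ℕ → ℝ) | fireworkSurvives p.1 p.2} ⊆ Tᶜ := by
    intro p hps hpT
    simp only [hTdef, Set.mem_iInter, Set.mem_iUnion] at hpT
    obtain ⟨m, -, hm⟩ := hpT 0
    exact not_survives_of_mem_FWUk hm hps
  have hV0 : (μ.prod ν) {p : (ℕ → ℕ) × (ℕ → ℕ → ℝ) | fireworkSurvives p.1 p.2} = 0 :=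
    le_antisymm (le_trans (measure_mono hVsub) hTc0.le) zero_le
  refine ⟨hV0, ?_⟩
  have h2 : ∫⁻ stn, ν (Prod.mk stn ⁻¹'
      {p : (ℕ → ℕ) × (ℕ → ℕ → ℝ) | fireworkSurvives p.1 p.2}) ∂μ = 0 := by
    rw [← Measure.prod_apply measurableSet_survives]
    exact hV0
  have h3 := (lintegral_eq_zero_iff (measurable_measure_prodMk_left measurableSet_survives)).1 h2
  filter_upwards [h3] with stn hstn
  exact hstn

end
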